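/- For every ε > 0 there exists a connected weighted graph G with nonnegative edge weights and a spanning tree T of G such that mac(G) < w(G)/2 + ε·w(T). -/

import Mathlib

namespace MaxCut

/-- Weight of the cut induced by vertex set `A`: total weight of edges of `G`
with exactly one endpoint in `A`. -/
noncomputable def cutWeight {V : Type*} (G : SimpleGraph V) (w : Sym2 V → ℝ) (A : Set V) : ℝ :=
  ∑ᶠ e ∈ {e ∈ G.edgeSet | ∃ x y, e = s(x, y) ∧ x ∈ A ∧ y ∉ A}, w e

/-- Total weight of the edges of `G`. -/
noncomputable def totalWeight {V : Type*} (G : SimpleGraph V) (w : Sym2 V → ℝ) : ℝ :=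
  ∑ᶠ e ∈ G.edgeSet, w e

/-- Total weight of a set of edges. -/
noncomputable def setWeight {V : Type*} (w : Sym2 V → ℝ) (M : Set (Sym2 V)) : ℝ :=
  ∑ᶠ e ∈ M, w e

/-- `T` is a spanning tree of `G`. -/
def IsSpanningTree {V : Type*} (G T : SimpleGraph V) : Prop := T ≤ G ∧ T.IsTree

/-- `T` is a DFS tree of `G` rooted at `r`: a spanning tree such that every edge of `G`
joins an ancestor–descendant pair (here `x` is an ancestor of `y` in the tree `T` rooted
at `r` iff `x` lies on the unique `r`–`y` path, equivalently
`T.dist r x + T.dist x y = T.dist r y`). -/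
def IsDFSTree {V : Type*} (G T : SimpleGraph V) (r : V) : Prop :=
  T ≤ G ∧ T.IsTree ∧ ∀ x y, G.Adj x y →
    T.dist r x + T.dist x y = T.dist r y ∨ T.dist r y + T.dist y x = T.dist r x

/-- `M` is a matching of `G` (a set of pairwise non-adjacent edges of `G`). -/
def IsMatching {V : Type*} (G : SimpleGraph V) (M : Set (Sym2 V)) : Prop :=
  M ⊆ G.edgeSet ∧ ∀ e ∈ M, ∀ f ∈ M, e ≠ f → ∀ v, ¬(v ∈ e ∧ v ∈ f)

/-- Every vertex of `G` has degree at most `d`. -/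
def MaxDegreeLE {V : Type*} (G : SimpleGraph V) (d : ℕ) : Prop :=
  ∀ v : V, {u | G.Adj v u}.ncard ≤ d

open Finset

private lemma finsum_mem_le_sum {α : Type*} {w : α → ℝ} (hw : ∀ e, 0 ≤ w e)
    {S : Set α} {F : Finset α} (h : S ⊆ ↑F) :
    (∑ᶠ e ∈ S, w e) ≤ ∑ e ∈ F, w e := by
  have hS : S.Finite := F.finite_toSet.subset h
  rw [finsum_mem_eq_finite_toFinset_sum w hS]
  refine Finset.sum_le_sum_of_subset_of_nonneg (fun x hx => ?_) (fun i _ _ => hw i)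
  exact h (hS.mem_toFinset.mp hx)

private lemma sum_le_finsum_mem {α : Type*} {w : α → ℝ} (hw : ∀ e, 0 ≤ w e)
    {F : Finset α} {S : Set α} (h : ↑F ⊆ S) (hS : S.Finite) :
    (∑ e ∈ F, w e) ≤ ∑ᶠ e ∈ S, w e := by
  rw [finsum_mem_eq_finite_toFinset_sum w hS]
  refine Finset.sum_le_sum_of_subset_of_nonneg (fun x hx => ?_) (fun i _ _ => hw i)
  exact hS.mem_toFinset.mpr (h hx)

/-- The star graph on `Fin (n+1)` centered at `0`. -/
private def starG (n : ℕ) : SimpleGraph (Fin (n + 1)) where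
  Adj x y := x ≠ y ∧ (x = 0 ∨ y = 0)
  symm := ⟨fun x y h => ⟨h.1.symm, h.2.symm⟩⟩
  loopless := ⟨fun x h => h.1 rfl⟩

private lemma starG_path_from_zero {n : ℕ} {y : Fin (n + 1)}
    (p : (starG n).Walk 0 y) (hp : p.IsPath) : p.length ≤ 1 := by
  cases p with
  | nil => simp
  | @cons _ a _ h q =>
    cases q with
    | nil => simp
    | @cons _ b _ h' q' =>
      exfalso
      have ha : a ≠ 0 := fun hh => h.1 hh.symm
      have hb : b = 0 := h'.2.resolve_left ha
      subst hb
      have h0 : (0 : Fin (n+1)) ∈ (SimpleGraph.Walk.cons h' q').support := by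
        rw [SimpleGraph.Walk.support_cons]
        exact List.mem_cons_of_mem _ q'.start_mem_support
      exact ((SimpleGraph.Walk.cons_isPath_iff h _).mp hp).2 h0

private lemma starG_isAcyclic {n : ℕ} : (starG n).IsAcyclic := by
  intro v c hc
  have h3 := hc.three_le_length
  cases c with
  | nil => simp at h3
  | @cons _ a _ h q =>
    rw [SimpleGraph.Walk.cons_isCycle_iff] at hc
    have hlen : 2 ≤ q.length := by
      simp only [SimpleGraph.Walk.length_cons] at h3; omega
    rcases h.2 with hv | ha
    · subst hv
      have : q.reverse.length ≤ 1 :=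
        starG_path_from_zero q.reverse (hc.1.reverse)
      rw [SimpleGraph.Walk.length_reverse] at this
      omega
    · subst ha
      have := starG_path_from_zero q hc.1
      omega

private lemma starG_connected {n : ℕ} : (starG n).Connected := by
  rw [SimpleGraph.connected_iff]
  refine ⟨fun x y => ?_, ⟨0⟩⟩
  have key : ∀ z : Fin (n+1), (starG n).Reachable z 0 := by
    intro z
    by_cases hz : z = 0
    · subst hz; exact SimpleGraph.Reachable.refl _
    · exact SimpleGraph.Adj.reachable ⟨hz, Or.inr rfl⟩
  exact (key x).trans (key y).symm

private lemma amgm_bound (c : ℝ) {x y : ℝ} (hx : 0 ≤ x) (hy : 0 ≤ y)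
    (hxy : x + y = c) : x * y ≤ (c / 2) ^ 2 := by
  nlinarith [sq_nonneg (x - y)]

/-- For every `ε > 0` there is a connected weighted graph `G` with a spanning
tree `T` such that `mac(G) < w(G)/2 + ε·w(T)`. -/
theorem exists_graph_maxcut_lt {ε : ℝ} (hε : 0 < ε) :
    ∃ (n : ℕ) (G T : SimpleGraph (Fin n)) (w : Sym2 (Fin n) → ℝ),
      (∀ e, 0 ≤ w e) ∧ G.Connected ∧ IsSpanningTree G T ∧
      ∀ A : Set (Fin n),
        cutWeight G w A < totalWeight G w / 2 + ε * totalWeight T w := by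
  classical
  obtain ⟨m, hm⟩ := exists_nat_gt (max 2 ((4*ε+4)/(4*ε^2)))
  have hm2 : (2 : ℝ) < m := lt_of_le_of_lt (le_max_left _ _) hm
  have hm4 : 4*ε+4 < 4*ε^2 * m := by
    have h := lt_of_le_of_lt (le_max_right _ _) hm
    rw [div_lt_iff₀ (by positivity)] at h
    linarith
  have hmpos : (0 : ℝ) < m := by linarith
  set t : ℝ := 2 * ε * m with ht
  have htpos : 0 < t := by positivity
  set N := m + 1 with hN
  set w : Sym2 (Fin N) → ℝ := fun e => if (0 : Fin N) ∈ e then t else 1 with hw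
  have hw0 : ∀ e, 0 ≤ w e := by
    intro e; simp only [hw]; split_ifs <;> linarith
  refine ⟨N, ⊤, starG m, w, hw0, ?_, ⟨le_top, starG_connected, starG_isAcyclic⟩, ?_⟩
  · exact starG_connected.mono le_top
  intro A
  -- total weight of the tree
  have cardN : Fintype.card (Fin N) = m + 1 := by simp [hN]
  have hTW : t * m ≤ totalWeight (starG m) w := by
    have hsub : ↑((univ.erase (0 : Fin N)).image (fun y => s((0 : Fin N), y)))
        ⊆ (starG m).edgeSet := by
      intro e he
      simp only [coe_image, Set.mem_image, mem_coe, mem_erase] at he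
      obtain ⟨y, ⟨hy, -⟩, rfl⟩ := he
      exact ⟨fun h => hy h.symm, Or.inl rfl⟩
    have hle := sum_le_finsum_mem hw0 hsub (Set.toFinite _)
    have hsum : (∑ e ∈ (univ.erase (0 : Fin N)).image (fun y => s((0 : Fin N), y)), w e)
        = t * m := by
      rw [Finset.sum_image (fun x _ y _ h => (Sym2.congr_right).mp h)]
      have : ∀ y ∈ univ.erase (0 : Fin N), w s((0 : Fin N), y) = t := by
        intro y _; simp [hw]
      rw [Finset.sum_congr rfl this, Finset.sum_const,
        Finset.card_erase_of_mem (mem_univ _), card_univ, cardN]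
      simp only [Nat.add_sub_cancel, nsmul_eq_mul]
      ring
    rw [hsum] at hle
    exact hle
  -- total weight of the graph
  have hGW : totalWeight (⊤ : SimpleGraph (Fin N)) w = t * m + (((m:ℝ)+1) * m / 2 - m) := by
    rw [totalWeight, ← SimpleGraph.coe_edgeFinset, finsum_mem_coe_finset]
    have hfilter : (⊤ : SimpleGraph (Fin N)).edgeFinset.filter (fun e => (0 : Fin N) ∈ e)
        = (⊤ : SimpleGraph (Fin N)).incidenceFinset 0 := by
      rw [SimpleGraph.incidenceFinset_eq_filter]
    have hcard1 : ((⊤ : SimpleGraph (Fin N)).edgeFinset.filter (fun e => (0 : Fin N) ∈ e)).card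
        = m := by
      rw [hfilter, SimpleGraph.card_incidenceFinset_eq_degree, SimpleGraph.complete_graph_degree,
        cardN]
      omega
    have hcardE : (⊤ : SimpleGraph (Fin N)).edgeFinset.card = (m+1).choose 2 := by
      rw [SimpleGraph.card_edgeFinset_top_eq_card_choose_two, cardN]
    have hcard2 : ((⊤ : SimpleGraph (Fin N)).edgeFinset.filter (fun e => ¬ (0 : Fin N) ∈ e)).card
        = (m+1).choose 2 - m := by
      have := Finset.card_filter_add_card_filter_not
        (s := (⊤ : SimpleGraph (Fin N)).edgeFinset) (p := fun e => (0 : Fin N) ∈ e)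
      omega
    have hchoose : (((m+1).choose 2 : ℕ) : ℝ) = ((m:ℝ)+1) * m / 2 := by
      rw [Nat.cast_choose_two]; push_cast; ring
    have hmle : m ≤ (m+1).choose 2 := by
      rw [Nat.choose_succ_succ, Nat.choose_one_right]
      exact Nat.le_add_right _ _
    calc (∑ e ∈ (⊤ : SimpleGraph (Fin N)).edgeFinset, w e)
        = ∑ e ∈ (⊤ : SimpleGraph (Fin N)).edgeFinset, (if (0 : Fin N) ∈ e then t else 1) := rfl
      _ = t * m + (((m:ℝ)+1) * m / 2 - m) := by
          have hcast : (((m+1).choose 2 - m : ℕ) : ℝ) = ((m:ℝ)+1) * m / 2 - m := by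
            rw [Nat.cast_sub hmle, hchoose]
          rw [Finset.sum_ite, Finset.sum_const, Finset.sum_const, hcard1, hcard2,
            nsmul_eq_mul, nsmul_eq_mul, hcast]
          ring
  -- bounding the cut
  set A' : Finset (Fin N) := A.toFinset with hA'
  set B' : Finset (Fin N) := A'ᶜ with hB'
  have hab : (A'.card : ℝ) + (B'.card : ℝ) = (m : ℝ) + 1 := by
    have := Finset.card_add_card_compl A'
    rw [cardN] at this
    exact_mod_cast this
  have hcutbound : cutWeight (⊤ : SimpleGraph (Fin N)) w A ≤ (((m:ℝ) + 1 + t) / 2) ^ 2 := by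
    have hsub : {e ∈ (⊤ : SimpleGraph (Fin N)).edgeSet | ∃ x y, e = s(x, y) ∧ x ∈ A ∧ y ∉ A}
        ⊆ ↑((A' ×ˢ B').image (fun p => s(p.1, p.2))) := by
      rintro e ⟨-, x, y, rfl, hx, hy⟩
      simp only [coe_image, Set.mem_image, mem_coe, mem_product]
      exact ⟨(x, y), ⟨Set.mem_toFinset.mpr hx, Finset.mem_compl.mpr
        (fun h => hy (Set.mem_toFinset.mp h))⟩, rfl⟩
    have h1 : cutWeight (⊤ : SimpleGraph (Fin N)) w A
        ≤ ∑ p ∈ A' ×ˢ B', w s(p.1, p.2) := by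
      have := finsum_mem_le_sum hw0 hsub
      rw [Finset.sum_image ?_] at this
      · exact this
      · rintro ⟨x, y⟩ hxy ⟨x', y'⟩ hxy' hxx
        simp only [mem_coe, mem_product] at hxy hxy'
        rcases Sym2.eq_iff.mp hxx with ⟨rfl, rfl⟩ | ⟨rfl, rfl⟩
        · rfl
        · exact absurd hxy.1 (Finset.mem_compl.mp hxy'.2)
    have h2 : (∑ p ∈ A' ×ˢ B', w s(p.1, p.2))
        ≤ ∑ p ∈ A' ×ˢ B', ((if p.1 = 0 then t else 0) + (if p.2 = 0 then t else 0) + 1) := by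
      refine Finset.sum_le_sum (fun p _ => ?_)
      simp only [hw]
      have hnn : (0:ℝ) ≤ (if p.2 = 0 then t else 0) := by
        split_ifs; exacts [le_of_lt htpos, le_refl 0]
      rcases eq_or_ne p.1 0 with hp1 | hp1
      · rw [if_pos (by rw [Sym2.mem_iff]; exact Or.inl hp1.symm), if_pos hp1]
        linarith
      · rcases eq_or_ne p.2 0 with hp2 | hp2
        · rw [if_pos (by rw [Sym2.mem_iff]; exact Or.inr hp2.symm), if_neg hp1, if_pos hp2]
          linarith
        · have hne : ¬ (0:Fin N) ∈ s(p.1, p.2) := by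
            rw [Sym2.mem_iff]
            push_neg
            exact ⟨fun h => hp1 h.symm, fun h => hp2 h.symm⟩
          rw [if_neg hne, if_neg hp1, if_neg hp2]
          simp
    have h3 : (∑ p ∈ A' ×ˢ B', ((if p.1 = 0 then t else 0) + (if p.2 = 0 then t else 0) + 1))
        = (B'.card : ℝ) * (if (0:Fin N) ∈ A' then t else 0)
          + (A'.card : ℝ) * (if (0:Fin N) ∈ B' then t else 0)
          + (A'.card : ℝ) * (B'.card : ℝ) := by
      rw [Finset.sum_product]
      have inner : ∀ x : Fin N, (∑ y ∈ B', ((if x = 0 then t else 0) + (if y = 0 then t else 0) + 1))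
          = (B'.card : ℝ) * (if x = 0 then t else 0) + (if (0:Fin N) ∈ B' then t else 0)
            + (B'.card : ℝ) := by
        intro x
        rw [Finset.sum_add_distrib, Finset.sum_add_distrib, Finset.sum_const, Finset.sum_const,
          Finset.sum_ite_eq' B' (0 : Fin N) (fun _ => t), nsmul_eq_mul, nsmul_eq_mul, mul_one,
          mul_comm ((B'.card : ℕ) : ℝ)]
      simp only [inner]
      rw [Finset.sum_add_distrib, Finset.sum_add_distrib, ← Finset.mul_sum,
        Finset.sum_ite_eq' A' (0 : Fin N) (fun _ => t), Finset.sum_const, Finset.sum_const,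
        nsmul_eq_mul, nsmul_eq_mul]
      try ring
    by_cases h0 : (0 : Fin N) ∈ A
    · have h0A : (0:Fin N) ∈ A' := Set.mem_toFinset.mpr h0
      have h0B : (0:Fin N) ∉ B' := by simp [hB', h0A]
      rw [if_pos h0A, if_neg h0B] at h3
      calc cutWeight (⊤ : SimpleGraph (Fin N)) w A
          ≤ (B'.card : ℝ) * t + (A'.card : ℝ) * 0 + (A'.card : ℝ) * (B'.card : ℝ) :=
            le_trans h1 (le_trans h2 (le_of_eq h3))
        _ = (t + (A'.card : ℝ)) * (B'.card : ℝ) := by ring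
        _ ≤ (((m:ℝ) + 1 + t) / 2) ^ 2 :=
            amgm_bound _ (add_nonneg htpos.le (Nat.cast_nonneg _)) (Nat.cast_nonneg _)
              (by linarith)
    · have h0A : (0:Fin N) ∉ A' := fun h => h0 (Set.mem_toFinset.mp h)
      have h0B : (0:Fin N) ∈ B' := Finset.mem_compl.mpr h0A
      rw [if_neg h0A, if_pos h0B] at h3
      calc cutWeight (⊤ : SimpleGraph (Fin N)) w A
          ≤ (B'.card : ℝ) * 0 + (A'.card : ℝ) * t + (A'.card : ℝ) * (B'.card : ℝ) :=
            le_trans h1 (le_trans h2 (le_of_eq h3))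
        _ = (A'.card : ℝ) * (t + (B'.card : ℝ)) := by ring
        _ ≤ (((m:ℝ) + 1 + t) / 2) ^ 2 :=
            amgm_bound _ (Nat.cast_nonneg _) (add_nonneg htpos.le (Nat.cast_nonneg _))
              (by linarith)
  -- final arithmetic
  have hfinal : (((m:ℝ) + 1 + t) / 2) ^ 2
      < (t * m + (((m:ℝ)+1) * m / 2 - m)) / 2 + ε * (t * m) := by
    rw [ht]
    nlinarith [mul_lt_mul_of_pos_right hm4 hmpos, sq_nonneg ((m:ℝ) - 2)]
  have hRHS : (t * m + (((m:ℝ)+1) * m / 2 - m)) / 2 + ε * (t * m)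
      ≤ totalWeight (⊤ : SimpleGraph (Fin N)) w / 2 + ε * totalWeight (starG m) w := by
    rw [hGW]
    have := mul_le_mul_of_nonneg_left hTW (le_of_lt hε)
    linarith
  calc cutWeight (⊤ : SimpleGraph (Fin N)) w A ≤ (((m:ℝ) + 1 + t) / 2) ^ 2 := hcutbound
    _ < (t * m + (((m:ℝ)+1) * m / 2 - m)) / 2 + ε * (t * m) := hfinal
    _ ≤ _ := hRHS

end MaxCut
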